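/- Let X be a finite set with n elements, let σ_0, …, σ_{k−1} be enumerations of X, and let 𝓛_Σ be the family of all unions of prefixes of these enumerations. For a subset S ⊆ X define mex_i(S) to be the least index j such that the j-th element σ_i(j) of σ_i does not belong to S (and mex_i(S) = n if S = X). Then for all S, T ∈ 𝓛_Σ: S ⊆ T if and only if mex_i(S) ≤ mex_i(T) for every 0 ≤ i < k. Consequently, the map sending S to the integer vector (mex_0(S), …, mex_{k−1}(S)) is an order embedding of (𝓛_Σ, ⊆) into ℤ^k with the componentwise order. -/

import Mathlib

/-- `mex σ S`: the least index `j` such that the `j`-th element of `σ` does not belong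
to `S` (equal to the length of `σ` if every element of `σ` belongs to `S`). -/
def mex {α : Type*} [DecidableEq α] (σ : List α) (S : Finset α) : ℕ :=
  (σ.takeWhile fun a => decide (a ∈ S)).length

lemma mex_mono {α : Type*} [DecidableEq α] (σ : List α) {S T : Finset α} (h : S ⊆ T) :
    mex σ S ≤ mex σ T := by
  induction σ with
  | nil => simp [mex]
  | cons a l ih =>
    by_cases haS : a ∈ S
    · simp [mex, List.takeWhile, haS, h haS] at ih ⊢; omega
    · simp [mex, List.takeWhile, haS]

lemma take_mex_eq {α : Type*} [DecidableEq α] (σ : List α) (S : Finset α) :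
    σ.take (mex σ S) = σ.takeWhile fun a => decide (a ∈ S) := by
  induction σ with
  | nil => simp [mex]
  | cons a l ih =>
    by_cases h : a ∈ S
    · simp [mex, List.takeWhile, h] at ih ⊢; exact ih
    · simp [mex, List.takeWhile, h]

lemma mem_take_mex {α : Type*} [DecidableEq α] (σ : List α) (S : Finset α)
    {a : α} (ha : a ∈ σ.take (mex σ S)) : a ∈ S := by
  rw [take_mex_eq] at ha
  have := List.mem_takeWhile_imp ha
  simpa using this

lemma min_le_mex {α : Type*} [DecidableEq α] (σ : List α) (S : Finset α) (m : ℕ)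
    (h : ∀ a ∈ σ.take m, a ∈ S) : min m σ.length ≤ mex σ S := by
  induction σ generalizing m with
  | nil => simp
  | cons a l ih =>
    cases m with
    | zero => simp
    | succ m =>
      have haS : a ∈ S := h a (by simp)
      have := ih m (fun b hb => h b (by simp [hb]))
      simp [mex, List.takeWhile, haS] at this ⊢
      omega

theorem stmt5 {α : Type*} [DecidableEq α] (X : Finset α) (k : ℕ) (σ : Fin k → List α)
    (hσ : ∀ i, (σ i).Nodup ∧ (σ i).toFinset = X) :
    (∀ S ∈ { S : Finset α | ∃ f : Fin k → ℕ,
        S = Finset.univ.sup fun i => ((σ i).take (f i)).toFinset },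
      ∀ T ∈ { S : Finset α | ∃ f : Fin k → ℕ,
        S = Finset.univ.sup fun i => ((σ i).take (f i)).toFinset },
      (S ⊆ T ↔ ∀ i : Fin k, mex (σ i) S ≤ mex (σ i) T)) ∧
    ∃ e : { S : Finset α // ∃ f : Fin k → ℕ,
        S = Finset.univ.sup fun i => ((σ i).take (f i)).toFinset } ↪o (Fin k → ℤ),
      ∀ S, e S = fun i => (mex (σ i) S.1 : ℤ) := by
  -- key: every member of the family is contained in the union of its mex-prefixes
  have key : ∀ S : Finset α, (∃ f : Fin k → ℕ,
      S = Finset.univ.sup fun i => ((σ i).take (f i)).toFinset) →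
      ∀ a ∈ S, ∃ i : Fin k, a ∈ (σ i).take (mex (σ i) S) := by
    rintro S ⟨f, rfl⟩ a ha
    set S := Finset.univ.sup fun i => ((σ i).take (f i)).toFinset with hS
    rw [Finset.mem_sup] at ha
    obtain ⟨i, -, hai⟩ := ha
    rw [List.mem_toFinset] at hai
    refine ⟨i, ?_⟩
    have hsub : ∀ b ∈ (σ i).take (f i), b ∈ S := by
      intro b hb
      rw [hS, Finset.mem_sup]
      exact ⟨i, Finset.mem_univ i, List.mem_toFinset.2 hb⟩
    have hmin : min (f i) (σ i).length ≤ mex (σ i) S := min_le_mex _ _ _ hsub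
    have : (σ i).take (f i) = (σ i).take (min (f i) (σ i).length) := by
      rw [List.take_eq_take_iff]; omega
    rw [this] at hai
    exact List.take_subset_take_left _ hmin hai
  have main : ∀ S ∈ { S : Finset α | ∃ f : Fin k → ℕ,
        S = Finset.univ.sup fun i => ((σ i).take (f i)).toFinset },
      ∀ T ∈ { S : Finset α | ∃ f : Fin k → ℕ,
        S = Finset.univ.sup fun i => ((σ i).take (f i)).toFinset },
      (S ⊆ T ↔ ∀ i : Fin k, mex (σ i) S ≤ mex (σ i) T) := by
    intro S hS T hT
    constructor
    · intro hST i; exact mex_mono _ hST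
    · intro h a ha
      obtain ⟨i, hi⟩ := key S hS a ha
      have : a ∈ (σ i).take (mex (σ i) T) :=
        List.take_subset_take_left _ (h i) hi
      exact mem_take_mex _ _ this
  refine ⟨main, ?_⟩
  refine ⟨OrderEmbedding.ofMapLEIff
    (fun S => fun i => (mex (σ i) S.1 : ℤ)) ?_, fun S => rfl⟩
  intro S T
  constructor
  · intro h
    exact (main S.1 S.2 T.1 T.2).2 fun i => by have := h i; simpa using this
  · intro h i
    simpa using (main S.1 S.2 T.1 T.2).1 h i
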